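/- Consider a φ-smooth step-function congestion game with n players, m resources, and d ≥ 2 total breakpoints, where the jump values {a_{r,j}}_{r ∈ R, j ∈ [d_r]} are independent φ-smooth random variables (the breakpoints are fixed). Fix ε > 0, and let T be the supremum, over all starting profiles and all sequences of consecutive (1+ε)-improving moves, of the length of the sequence. Then E[T] ≤ φ·(1 + 1/ε)·n·d²·(m·ln(n+1) + ln d) + 1. -/

import Mathlib

open MeasureTheory ProbabilityTheory

/-- The load of resource `r` under strategy profile `s`: the number of players using `r`. -/
def load {n m : ℕ} (s : Fin n → Finset (Fin m)) (r : Fin m) : ℕ :=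
  (Finset.univ.filter fun i => r ∈ s i).card

/-- The cost of player `i` under profile `s`, with resource costs `cost r ℓ`. -/
def playerCost {n m : ℕ} (cost : Fin m → ℕ → ℝ) (s : Fin n → Finset (Fin m)) (i : Fin n) : ℝ :=
  ∑ r ∈ s i, cost r (load s r)

/-- Rosenthal's potential `Φ(s) = Σ_{r ∈ R} Σ_{j=1}^{ℓ_r(s)} c_r(j)`. -/
def potential {n m : ℕ} (cost : Fin m → ℕ → ℝ) (s : Fin n → Finset (Fin m)) : ℝ :=
  ∑ r : Fin m, ∑ j ∈ Finset.Icc 1 (load s r), cost r j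

/-- A strategy profile is valid when each player plays a strategy from their strategy set. -/
def ValidProfile {n m : ℕ} (strat : Fin n → Set (Finset (Fin m)))
    (s : Fin n → Finset (Fin m)) : Prop :=
  ∀ i, s i ∈ strat i

/-- An `(1+ε)`-improving move from `s` to `s'`: some player `i` deviates to a strategy
`si' ∈ S_i` with `(1+ε)·C_i(s') < C_i(s)`. -/
def ImprovingMove {n m : ℕ} (strat : Fin n → Set (Finset (Fin m))) (cost : Fin m → ℕ → ℝ)
    (ε : ℝ) (s s' : Fin n → Finset (Fin m)) : Prop :=
  ∃ i : Fin n, ∃ si' ∈ strat i, s' = Function.update s i si' ∧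
    (1 + ε) * playerCost cost s' i < playerCost cost s i

/-- The step-function resource cost: resource `r` has `dr r` breakpoints `b r` with jump
values `a r`, and `c_r(ℓ) = Σ_{j : b_{r,j} ≤ ℓ} a_{r,j}`. -/
def stepCost {m : ℕ} (dr : Fin m → ℕ) (b : (r : Fin m) → Fin (dr r) → ℕ)
    (a : (r : Fin m) → Fin (dr r) → ℝ) : Fin m → ℕ → ℝ :=
  fun r ℓ => ∑ j ∈ Finset.univ.filter (fun j => b r j ≤ ℓ), a r j

/-- A `φ`-smooth random variable: a real-valued random variable taking values in `[0,1]`,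
absolutely continuous with density bounded above by `φ`. -/
def PhiSmooth {Ω : Type*} [MeasurableSpace Ω] (P : Measure Ω) (φ : ℝ) (X : Ω → ℝ) : Prop :=
  Measurable X ∧ ∃ f : ℝ → ENNReal,
    Measure.map X P = volume.withDensity f ∧
    (∀ x, f x ≤ ENNReal.ofReal φ) ∧ ∀ x, x ∉ Set.Icc (0 : ℝ) 1 → f x = 0

/-- The supremum, over all starting profiles and all sequences of consecutive
`(1+ε)`-improving moves, of the length of the sequence. -/
noncomputable def maxImprovingSeqLen {n m : ℕ} (strat : Fin n → Set (Finset (Fin m)))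
    (cost : Fin m → ℕ → ℝ) (ε : ℝ) : ℕ :=
  sSup {T : ℕ | ∃ s : ℕ → Fin n → Finset (Fin m),
    (∀ k ≤ T, ValidProfile strat (s k)) ∧
    ∀ k < T, ImprovingMove strat cost ε (s k) (s (k + 1))}

lemma load_le_n {n m : ℕ} (s : Fin n → Finset (Fin m)) (r : Fin m) : load s r ≤ n := by
  classical
  calc load s r ≤ (Finset.univ : Finset (Fin n)).card := Finset.card_filter_le _ _
  _ = n := by simp

lemma one_le_load {n m : ℕ} {s : Fin n → Finset (Fin m)} {r : Fin m} {i : Fin n}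
    (h : r ∈ s i) : 1 ≤ load s r := by
  classical
  apply Finset.card_pos.mpr
  exact ⟨i, by simp [h]⟩

lemma load_update {n m : ℕ} (s : Fin n → Finset (Fin m)) (i : Fin n) (si' : Finset (Fin m))
    (r : Fin m) :
    load (Function.update s i si') r + (if r ∈ s i then 1 else 0)
      = load s r + (if r ∈ si' then 1 else 0) := by
  classical
  have key : ∀ t : Fin n → Finset (Fin m),
      (Finset.univ.filter fun j => r ∈ t j).card
        = ((Finset.univ.filter fun j => r ∈ t j).erase i).card + (if r ∈ t i then 1 else 0) := by
    intro t
    by_cases h : r ∈ t i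
    · have hi : i ∈ Finset.univ.filter fun j => r ∈ t j := by simp [h]
      rw [Finset.card_erase_of_mem hi]
      have : 1 ≤ (Finset.univ.filter fun j => r ∈ t j).card := Finset.card_pos.mpr ⟨i, hi⟩
      simp [h]; omega
    · have hi : i ∉ Finset.univ.filter fun j => r ∈ t j := by simp [h]
      rw [Finset.erase_eq_of_notMem hi]; simp [h]
  have herase : ((Finset.univ.filter fun j => r ∈ Function.update s i si' j).erase i)
      = ((Finset.univ.filter fun j => r ∈ s j).erase i) := by
    ext j
    by_cases hj : j = i <;> simp [hj, Function.update_apply]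
  simp only [load]
  rw [key (Function.update s i si'), key s, herase, Function.update_self]
  omega

lemma potential_update {n m : ℕ} (cost : Fin m → ℕ → ℝ) (s : Fin n → Finset (Fin m))
    (i : Fin n) (si' : Finset (Fin m)) :
    potential cost (Function.update s i si') - potential cost s
      = playerCost cost (Function.update s i si') i - playerCost cost s i := by
  classical
  set s' := Function.update s i si' with hs'
  have key : ∀ r : Fin m,
      (∑ j ∈ Finset.Icc 1 (load s' r), cost r j) - (∑ j ∈ Finset.Icc 1 (load s r), cost r j)
        = (if r ∈ si' \ s i then cost r (load s' r) else 0)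
          - (if r ∈ s i \ si' then cost r (load s r) else 0) := by
    intro r
    have hlu := load_update s i si' r
    rw [← hs'] at hlu
    by_cases h1 : r ∈ s i <;> by_cases h2 : r ∈ si' <;>
      simp only [h1, h2, if_true, if_false] at hlu
    · have : load s' r = load s r := by omega
      simp [this, h1, h2]
    · -- r ∈ s i, r ∉ si' : load s r = load s' r + 1
      have hl : load s r = load s' r + 1 := by omega
      rw [hl, Finset.sum_Icc_succ_top (by omega)]
      simp [h1, h2, hl]
    · -- r ∉ s i, r ∈ si' : load s' r = load s r + 1
      have hl : load s' r = load s r + 1 := by omega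
      rw [hl, Finset.sum_Icc_succ_top (by omega)]
      simp [h1, h2, hl]
    · have : load s' r = load s r := by omega
      simp [this, h1, h2]
  have hpot : potential cost s' - potential cost s
      = (∑ r ∈ si' \ s i, cost r (load s' r)) - (∑ r ∈ s i \ si', cost r (load s r)) := by
    unfold potential
    rw [← Finset.sum_sub_distrib]
    rw [Finset.sum_congr rfl (fun r _ => key r)]
    rw [Finset.sum_sub_distrib]
    congr 1
    · rw [Finset.sum_ite_mem, Finset.univ_inter]
    · rw [Finset.sum_ite_mem, Finset.univ_inter]
  have hload_eq : ∀ r ∈ s i ∩ si', cost r (load s' r) = cost r (load s r) := by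
    intro r hr
    simp only [Finset.mem_inter] at hr
    have hlu := load_update s i si' r
    rw [← hs'] at hlu
    simp only [hr.1, hr.2, if_true] at hlu
    have : load s' r = load s r := by omega
    rw [this]
  have hpc : playerCost cost s' i - playerCost cost s i
      = (∑ r ∈ si' \ s i, cost r (load s' r)) - (∑ r ∈ s i \ si', cost r (load s r)) := by
    unfold playerCost
    have h1 : s' i = si' := Function.update_self i si' s
    rw [h1]
    rw [← Finset.sum_inter_add_sum_sdiff si' (s i) (fun r => cost r (load s' r)),
        ← Finset.sum_inter_add_sum_sdiff (s i) si' (fun r => cost r (load s r))]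
    have : ∑ r ∈ si' ∩ s i, cost r (load s' r) = ∑ r ∈ s i ∩ si', cost r (load s r) := by
      rw [Finset.inter_comm]
      exact Finset.sum_congr rfl hload_eq
    rw [this]; ring
  rw [hpot, hpc]

section Chain
variable {n m : ℕ} (dr : Fin m → ℕ) (b : (r : Fin m) → Fin (dr r) → ℕ)
  (a : (r : Fin m) → Fin (dr r) → ℝ)

lemma stepCost_nonneg (ha0 : ∀ r j, 0 ≤ a r j) (r : Fin m) (ℓ : ℕ) :
    0 ≤ stepCost dr b a r ℓ :=
  Finset.sum_nonneg fun j _ => ha0 r j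

lemma stepCost_le (ha1 : ∀ r j, a r j ≤ 1) (r : Fin m) (ℓ : ℕ) :
    stepCost dr b a r ℓ ≤ dr r := by
  calc stepCost dr b a r ℓ ≤ ∑ j ∈ Finset.univ.filter (fun j => b r j ≤ ℓ), 1 :=
        Finset.sum_le_sum fun j _ => ha1 r j
  _ = ((Finset.univ.filter (fun j => b r j ≤ ℓ)).card : ℝ) := by simp
  _ ≤ dr r := by
      have := Finset.card_filter_le (Finset.univ : Finset (Fin (dr r))) (fun j => b r j ≤ ℓ)
      simp at this
      exact_mod_cast this

lemma potential_nonneg (ha0 : ∀ r j, 0 ≤ a r j) (s : Fin n → Finset (Fin m)) :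
    0 ≤ potential (stepCost dr b a) s :=
  Finset.sum_nonneg fun r _ => Finset.sum_nonneg fun j _ => stepCost_nonneg dr b a ha0 r j

lemma potential_le (ha0 : ∀ r j, 0 ≤ a r j) (ha1 : ∀ r j, a r j ≤ 1)
    (s : Fin n → Finset (Fin m)) :
    potential (stepCost dr b a) s ≤ (n : ℝ) * (∑ r : Fin m, dr r : ℕ) := by
  have key : ∀ r : Fin m, ∑ j ∈ Finset.Icc 1 (load s r), stepCost dr b a r j
      ≤ (n : ℝ) * dr r := by
    intro r
    calc ∑ j ∈ Finset.Icc 1 (load s r), stepCost dr b a r j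
        ≤ ∑ _j ∈ Finset.Icc 1 (load s r), (dr r : ℝ) :=
          Finset.sum_le_sum fun j _ => stepCost_le dr b a ha1 r j
    _ = ((Finset.Icc 1 (load s r)).card : ℝ) * dr r := by rw [Finset.sum_const]; simp [mul_comm]
    _ ≤ (n : ℝ) * dr r := by
        apply mul_le_mul_of_nonneg_right _ (by positivity)
        have h1 : (Finset.Icc 1 (load s r)).card = load s r := by
          rw [Nat.card_Icc]; omega
        rw [h1]
        exact_mod_cast load_le_n s r
  calc potential (stepCost dr b a) s ≤ ∑ r : Fin m, (n : ℝ) * dr r :=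
        Finset.sum_le_sum fun r _ => key r
  _ = (n : ℝ) * (∑ r : Fin m, dr r : ℕ) := by
      rw [← Finset.mul_sum]; push_cast; ring

lemma playerCost_ge (hdr : ∀ r, 0 < dr r) (hb1 : ∀ r, b r ⟨0, hdr r⟩ = 1)
    (ha0 : ∀ r j, 0 ≤ a r j) {α : ℝ} (hα : ∀ r j, α ≤ a r j)
    (s : Fin n → Finset (Fin m)) (i : Fin n) (hne : (s i).Nonempty) :
    α ≤ playerCost (stepCost dr b a) s i := by
  obtain ⟨r, hr⟩ := hne
  have h1 : α ≤ stepCost dr b a r (load s r) := by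
    have hj : (⟨0, hdr r⟩ : Fin (dr r)) ∈ Finset.univ.filter (fun j => b r j ≤ load s r) := by
      simp [hb1 r]
      exact one_le_load hr
    calc α ≤ a r ⟨0, hdr r⟩ := hα r _
    _ ≤ stepCost dr b a r (load s r) :=
        Finset.single_le_sum (fun j _ => ha0 r j) hj
  calc α ≤ stepCost dr b a r (load s r) := h1
  _ ≤ playerCost (stepCost dr b a) s i :=
      Finset.single_le_sum (fun r' _ => stepCost_nonneg dr b a ha0 r' _) hr

variable (strat : Fin n → Set (Finset (Fin m))) (ε : ℝ)

/-- One improving move drops the potential by at least `ε/(1+ε) * α`, and strictly. -/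
lemma improving_drop (hdr : ∀ r, 0 < dr r) (hb1 : ∀ r, b r ⟨0, hdr r⟩ = 1)
    (hstrat' : ∀ i, ∀ t ∈ strat i, t.Nonempty)
    (ha0 : ∀ r j, 0 ≤ a r j) {α : ℝ} (hα : ∀ r j, α ≤ a r j) (hε : 0 < ε)
    {s s' : Fin n → Finset (Fin m)} (hv : ValidProfile strat s)
    (h : ImprovingMove strat (stepCost dr b a) ε s s') :
    potential (stepCost dr b a) s' + ε / (1 + ε) * α ≤ potential (stepCost dr b a) s := by
  obtain ⟨i, si', hsi', hs', hlt⟩ := h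
  set cost := stepCost dr b a
  have hdiff : potential cost s' - potential cost s = playerCost cost s' i - playerCost cost s i := by
    rw [hs']; exact potential_update cost s i si'
  have hC : α ≤ playerCost cost s i := playerCost_ge dr b a hdr hb1 ha0 hα s i (hstrat' i _ (hv i))
  have hC'0 : 0 ≤ playerCost cost s' i :=
    Finset.sum_nonneg fun r _ => stepCost_nonneg dr b a ha0 r _
  have h1e : (0:ℝ) < 1 + ε := by linarith
  -- C - C' ≥ ε/(1+ε) * C ≥ ε/(1+ε) * α
  have hkey : ε / (1 + ε) * playerCost cost s i ≤ playerCost cost s i - playerCost cost s' i := by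
    rw [div_mul_eq_mul_div, div_le_iff₀ h1e]
    nlinarith
  have : ε / (1 + ε) * α ≤ ε / (1 + ε) * playerCost cost s i := by
    apply mul_le_mul_of_nonneg_left hC (by positivity)
  linarith

lemma improving_strict (ha0 : ∀ r j, 0 ≤ a r j) (hε : 0 < ε)
    {s s' : Fin n → Finset (Fin m)}
    (h : ImprovingMove strat (stepCost dr b a) ε s s') :
    potential (stepCost dr b a) s' < potential (stepCost dr b a) s := by
  obtain ⟨i, si', hsi', hs', hlt⟩ := h
  set cost := stepCost dr b a
  have hdiff : potential cost s' - potential cost s = playerCost cost s' i - playerCost cost s i := by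
    rw [hs']; exact potential_update cost s i si'
  have hC'0 : 0 ≤ playerCost cost s' i :=
    Finset.sum_nonneg fun r _ => stepCost_nonneg dr b a ha0 r _
  nlinarith

lemma chain_length_bound (hdr : ∀ r, 0 < dr r) (hb1 : ∀ r, b r ⟨0, hdr r⟩ = 1)
    (hstrat' : ∀ i, ∀ t ∈ strat i, t.Nonempty)
    (ha0 : ∀ r j, 0 ≤ a r j) (ha1 : ∀ r j, a r j ≤ 1)
    {α : ℝ} (hα : ∀ r j, α ≤ a r j) (hε : 0 < ε)
    (T : ℕ) (s : ℕ → Fin n → Finset (Fin m))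
    (hv : ∀ k ≤ T, ValidProfile strat (s k))
    (him : ∀ k < T, ImprovingMove strat (stepCost dr b a) ε (s k) (s (k + 1))) :
    (T : ℝ) * (ε / (1 + ε) * α) ≤ (n : ℝ) * (∑ r : Fin m, dr r : ℕ) := by
  set cost := stepCost dr b a
  have key : ∀ k ≤ T, potential cost (s k) + (k : ℝ) * (ε / (1 + ε) * α)
      ≤ potential cost (s 0) := by
    intro k hk
    induction k with
    | zero => simp
    | succ k ih =>
      have h1 : potential cost (s (k+1)) + ε / (1 + ε) * α ≤ potential cost (s k) :=
        improving_drop dr b a strat ε hdr hb1 hstrat' ha0 hα hε (hv k (by omega))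
          (him k (by omega))
      have h2 := ih (by omega)
      push_cast
      nlinarith
  have h1 := key T le_rfl
  have h2 := potential_nonneg dr b a ha0 (s T)
  have h3 := potential_le dr b a ha0 ha1 (s 0)
  linarith

lemma chain_card_bound (ha0 : ∀ r j, 0 ≤ a r j) (hε : 0 < ε)
    (T : ℕ) (s : ℕ → Fin n → Finset (Fin m))
    (him : ∀ k < T, ImprovingMove strat (stepCost dr b a) ε (s k) (s (k + 1))) :
    T + 1 ≤ (n + 1) ^ m := by
  classical
  set cost := stepCost dr b a
  have hmono : ∀ k l, k < l → l ≤ T → potential cost (s l) < potential cost (s k) := by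
    intro k l hkl hlT
    induction l with
    | zero => omega
    | succ l ih =>
      have hstep : potential cost (s (l+1)) < potential cost (s l) :=
        improving_strict dr b a strat ε ha0 hε (him l (by omega))
      rcases Nat.lt_or_ge k l with h | h
      · exact lt_trans hstep (ih h (by omega))
      · have : k = l := by omega
        rw [this]; exact hstep
  let V : Finset ℝ := Finset.image
    (fun ℓ : Fin m → Fin (n+1) => ∑ r : Fin m, ∑ j ∈ Finset.Icc 1 (ℓ r : ℕ), cost r j)
    Finset.univ
  have hmem : ∀ k : Fin (T+1), potential cost (s k) ∈ V := by
    intro k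
    apply Finset.mem_image.mpr
    refine ⟨fun r => ⟨load (s k) r, by have := load_le_n (s k) r; omega⟩, Finset.mem_univ _, rfl⟩
  have hinj : Function.Injective (fun k : Fin (T+1) => potential cost (s (k : ℕ))) := by
    intro k l hkl
    have hkl' : potential cost (s (k : ℕ)) = potential cost (s (l : ℕ)) := hkl
    by_contra hne
    have hne' : (k : ℕ) ≠ (l : ℕ) := fun h => hne (Fin.ext h)
    rcases Nat.lt_or_ge (k : ℕ) (l : ℕ) with h | h
    · have := hmono k l h (by omega)
      linarith
    · have hlk : (l : ℕ) < (k : ℕ) := by omega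
      have := hmono l k hlk (by omega)
      linarith
  have hcard : T + 1 ≤ V.card := by
    have := Finset.card_le_card_of_injOn (s := (Finset.univ : Finset (Fin (T+1)))) (t := V)
      (fun k : Fin (T+1) => potential cost (s (k : ℕ)))
      (fun k _ => hmem k) (fun k _ l _ h => hinj h)
    simpa using this
  have hV : V.card ≤ (n+1)^m := by
    calc V.card ≤ (Finset.univ : Finset (Fin m → Fin (n+1))).card := Finset.card_image_le
    _ = (n+1)^m := by simp
  exact hcard.trans hV

end Chain

lemma harmonic_le_log : ∀ N : ℕ, ∑ t ∈ Finset.Icc 2 N, (1 / (t : ℝ)) ≤ Real.log N := by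
  intro N
  induction N with
  | zero => simp
  | succ N ih =>
    rcases Nat.eq_zero_or_pos N with hN | hN
    · subst hN; simp
    · rw [Finset.sum_Icc_succ_top (by omega : 2 ≤ N + 1)]
      have hN0 : (0:ℝ) < N := by exact_mod_cast hN
      have hstep : 1 / ((N:ℝ) + 1) ≤ Real.log (N + 1) - Real.log N := by
        have h := Real.log_le_sub_one_of_pos (show (0:ℝ) < (N:ℝ)/((N:ℝ)+1) by positivity)
        rw [Real.log_div (by positivity) (by positivity)] at h
        have heq : (N:ℝ)/((N:ℝ)+1) - 1 = -(1/((N:ℝ)+1)) := by field_simp; ring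
        linarith [heq ▸ h]
      push_cast
      linarith

lemma phiSmooth_cdf {Ω : Type*} [MeasurableSpace Ω] {P : Measure Ω} {φ : ℝ} {X : Ω → ℝ}
    (hφ : 0 ≤ φ) (h : PhiSmooth P φ X) {x : ℝ} (hx : 0 ≤ x) :
    P {ω | X ω ≤ x} ≤ ENNReal.ofReal (φ * x) := by
  obtain ⟨hm, f, hmap, hbd, hsupp⟩ := h
  have h1 : P {ω | X ω ≤ x} = Measure.map X P (Set.Iic x) := by
    rw [Measure.map_apply hm measurableSet_Iic]; rfl
  rw [h1, hmap, withDensity_apply f measurableSet_Iic]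
  have hptw : ∀ᵐ a ∂(volume.restrict (Set.Iic x)),
      f a ≤ (Set.Icc (0:ℝ) x).indicator (fun _ => ENNReal.ofReal φ) a := by
    filter_upwards [self_mem_ae_restrict (measurableSet_Iic : MeasurableSet (Set.Iic x))]
      with a ha
    by_cases hI : a ∈ Set.Icc (0:ℝ) 1
    · have : a ∈ Set.Icc (0:ℝ) x := ⟨hI.1, ha⟩
      rw [Set.indicator_of_mem this]
      exact hbd a
    · rw [hsupp a hI]; exact zero_le
  calc ∫⁻ a in Set.Iic x, f a
      ≤ ∫⁻ a in Set.Iic x, (Set.Icc (0:ℝ) x).indicator (fun _ => ENNReal.ofReal φ) a :=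
        lintegral_mono_ae hptw
  _ ≤ ∫⁻ a, (Set.Icc (0:ℝ) x).indicator (fun _ => ENNReal.ofReal φ) a :=
        setLIntegral_le_lintegral _ _
  _ = ENNReal.ofReal φ * volume (Set.Icc (0:ℝ) x) := by
        rw [lintegral_indicator measurableSet_Icc]; simp [lintegral_const]
  _ ≤ ENNReal.ofReal (φ * x) := by
        rw [Real.volume_Icc, ENNReal.ofReal_mul hφ]
        gcongr
        simp
lemma phiSmooth_notIoc {Ω : Type*} [MeasurableSpace Ω] {P : Measure Ω} {φ : ℝ} {X : Ω → ℝ}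
    (h : PhiSmooth P φ X) : P {ω | X ω ∉ Set.Ioc (0:ℝ) 1} = 0 := by
  obtain ⟨hm, f, hmap, hbd, hsupp⟩ := h
  have hms : MeasurableSet ((Set.Ioc (0:ℝ) 1)ᶜ) := measurableSet_Ioc.compl
  have h1 : P {ω | X ω ∉ Set.Ioc (0:ℝ) 1} = Measure.map X P ((Set.Ioc (0:ℝ) 1)ᶜ) := by
    rw [Measure.map_apply hm hms]; rfl
  rw [h1, hmap, withDensity_apply f hms]
  have hptw : ∀ᵐ a ∂(volume.restrict ((Set.Ioc (0:ℝ) 1)ᶜ)),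
      f a ≤ ({(0:ℝ)} : Set ℝ).indicator (fun _ => ENNReal.ofReal φ) a := by
    filter_upwards [self_mem_ae_restrict hms] with a ha
    by_cases hI : a ∈ Set.Icc (0:ℝ) 1
    · have ha0 : a = 0 := by
        simp only [Set.mem_compl_iff, Set.mem_Ioc, not_and_or, not_lt, not_le] at ha
        rcases ha with h' | h'
        · linarith [hI.1]
        · linarith [hI.2]
      rw [ha0]
      simpa using hbd 0
    · rw [hsupp a hI]; exact zero_le
  have : ∫⁻ a in (Set.Ioc (0:ℝ) 1)ᶜ, f a
      ≤ ∫⁻ a, ({(0:ℝ)} : Set ℝ).indicator (fun _ => ENNReal.ofReal φ) a := by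
    exact (lintegral_mono_ae hptw).trans (setLIntegral_le_lintegral _ _)
  rw [lintegral_indicator (measurableSet_singleton 0)] at this
  simp only [lintegral_const, Measure.restrict_apply MeasurableSet.univ, Set.univ_inter,
    Real.volume_singleton, mul_zero, nonpos_iff_eq_zero] at this
  exact this

/-- in a `φ`-smooth step-function congestion game with `n` players, `m`
resources and `d = Σ_r d_r ≥ 2` total breakpoints (the jump values being independent
`φ`-smooth random variables, the breakpoints fixed), for any `ε > 0` the expected length
`E[T]` of the longest sequence of consecutive `(1+ε)`-improving moves satisfies
`E[T] ≤ φ·(1 + 1/ε)·n·d²·(m·ln(n+1) + ln d) + 1`. -/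
theorem smoothed_step_function_brd_bound
    {Ω : Type*} [MeasurableSpace Ω] (P : Measure Ω) [IsProbabilityMeasure P]
    {n m : ℕ} (hn : 0 < n)
    (φ : ℝ) (hφ : 1 ≤ φ)
    (strat : Fin n → Set (Finset (Fin m)))
    (hstrat : ∀ i, (strat i).Nonempty)
    (hstrat' : ∀ i, ∀ t ∈ strat i, t.Nonempty)
    (dr : Fin m → ℕ) (hdr : ∀ r, 0 < dr r)
    (hd2 : 2 ≤ ∑ r : Fin m, dr r)
    (b : (r : Fin m) → Fin (dr r) → ℕ)
    (hb1 : ∀ r, b r ⟨0, hdr r⟩ = 1)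
    (hbmono : ∀ r, StrictMono (b r))
    (hbn : ∀ r j, b r j ≤ n)
    (c : ((r : Fin m) × Fin (dr r)) → Ω → ℝ)
    (hsmooth : ∀ p, PhiSmooth P φ (c p))
    (hindep : iIndepFun c P)
    (ε : ℝ) (hε : 0 < ε) :
    ∫⁻ ω, (maxImprovingSeqLen strat (stepCost dr b fun r j => c ⟨r, j⟩ ω) ε : ENNReal) ∂P
      ≤ ENNReal.ofReal
          (φ * (1 + 1 / ε) * n * (∑ r : Fin m, dr r : ℕ) ^ 2 *
              (m * Real.log (n + 1) + Real.log (∑ r : Fin m, dr r : ℕ)) + 1) := by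
  classical
  set dtot : ℕ := ∑ r : Fin m, dr r with hdtot
  have hm : 0 < m := by
    have huniv : (Finset.univ : Finset (Fin m)).Nonempty := by
      by_contra h
      rw [Finset.not_nonempty_iff_eq_empty] at h
      rw [hdtot, h] at hd2
      simp at hd2
    rw [Fin.pos_iff_nonempty]
    exact ⟨huniv.choose⟩
  have hι : Nonempty ((r : Fin m) × Fin (dr r)) := ⟨⟨⟨0, hm⟩, ⟨0, hdr ⟨0, hm⟩⟩⟩⟩
  have hcardι : Fintype.card ((r : Fin m) × Fin (dr r)) = dtot := by
    simp [Fintype.card_sigma, hdtot]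
  have hφ0 : (0:ℝ) ≤ φ := by linarith
  have h1ε : (0:ℝ) < 1 + 1/ε := by positivity
  set β : ℝ := (1 + 1/ε) * n * dtot with hβ
  have hβ0 : 0 ≤ β := by positivity
  set G : Set Ω := {ω | ∀ p, c p ω ∈ Set.Ioc (0:ℝ) 1} with hG
  have hGc : P Gᶜ = 0 := by
    have hsub : Gᶜ ⊆ ⋃ p, {ω | c p ω ∉ Set.Ioc (0:ℝ) 1} := by
      intro ω hω
      simp only [hG, Set.mem_compl_iff, Set.mem_setOf_eq, not_forall] at hω
      obtain ⟨p, hp⟩ := hω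
      exact Set.mem_iUnion.mpr ⟨p, hp⟩
    exact measure_mono_null hsub (measure_iUnion_null fun p => phiSmooth_notIoc (hsmooth p))
  set Tmax : ℕ := (n + 1) ^ m with hTmax
  set E : ℕ → Set Ω := fun t => ⋃ p, {ω | c p ω ≤ β / t} with hE
  have hEmeas : ∀ t, MeasurableSet (E t) := by
    intro t
    exact MeasurableSet.iUnion fun p => (hsmooth p).1 measurableSet_Iic
  -- pointwise bound on the good event
  have hpt : ∀ ω ∈ G,
      (maxImprovingSeqLen strat (stepCost dr b fun r j => c ⟨r, j⟩ ω) ε : ENNReal)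
        ≤ ∑ t ∈ Finset.Icc 1 Tmax, (E t).indicator (fun _ => (1:ENNReal)) ω := by
    intro ω hω
    set a : (r : Fin m) → Fin (dr r) → ℝ := fun r j => c ⟨r, j⟩ ω with ha
    have ha0 : ∀ r j, 0 ≤ a r j := fun r j => le_of_lt (hω ⟨r, j⟩).1
    have ha1 : ∀ r j, a r j ≤ 1 := fun r j => (hω ⟨r, j⟩).2
    set α : ℝ := Finset.univ.inf' (Finset.univ_nonempty) (fun p : (r : Fin m) × Fin (dr r) => c p ω)
      with hαdef
    have hα : ∀ r j, α ≤ a r j := fun r j => Finset.inf'_le _ (Finset.mem_univ (⟨r, j⟩ : (r : Fin m) × Fin (dr r)))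
    have hα0 : 0 < α := by
      rw [hαdef, Finset.lt_inf'_iff]
      exact fun p _ => (hω p).1
    set T : ℕ := maxImprovingSeqLen strat (stepCost dr b a) ε with hT
    rcases Nat.eq_zero_or_pos T with hT0 | hT0
    · rw [hT0]; simp
    · set S : Set ℕ := {T' : ℕ | ∃ s : ℕ → Fin n → Finset (Fin m),
        (∀ k ≤ T', ValidProfile strat (s k)) ∧
        ∀ k < T', ImprovingMove strat (stepCost dr b a) ε (s k) (s (k + 1))} with hS
      have hSb : ∀ T' ∈ S, T' + 1 ≤ Tmax := by
        rintro T' ⟨s, hv, him⟩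
        exact chain_card_bound dr b a strat ε ha0 hε T' s him
      have hTS : T = sSup S := rfl
      have hTmem : T ∈ S := by
        rw [hTS]
        apply Nat.sSup_mem
        · by_contra hemp
          rw [Set.not_nonempty_iff_eq_empty] at hemp
          rw [hTS, hemp] at hT0
          simp at hT0
        · exact ⟨Tmax, fun T' hT' => by have := hSb T' hT'; omega⟩
      obtain ⟨s, hv, him⟩ := hTmem
      have hTm : T + 1 ≤ Tmax := hSb T ⟨s, hv, him⟩
      have hchain : (T : ℝ) * (ε / (1 + ε) * α) ≤ (n : ℝ) * (dtot : ℕ) :=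
        chain_length_bound dr b a strat ε hdr hb1 hstrat' ha0 ha1 hα hε T s hv him
      have hmemE : ∀ t ∈ Finset.Icc 1 T, ω ∈ E t := by
        intro t ht
        rw [Finset.mem_Icc] at ht
        have ht0 : (0:ℝ) < t := by exact_mod_cast ht.1
        have htT : (t:ℝ) ≤ T := by exact_mod_cast ht.2
        have h1e : (0:ℝ) < 1 + ε := by linarith
        have hαβ : α ≤ β / t := by
          rw [le_div_iff₀ ht0]
          have h1 : α * t ≤ α * T := by
            apply mul_le_mul_of_nonneg_left htT (le_of_lt hα0)
          have h2 : ε / (1 + ε) * (α * T) ≤ ε / (1 + ε) * β := by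
            calc ε / (1 + ε) * (α * T) = (T : ℝ) * (ε / (1 + ε) * α) := by ring
            _ ≤ (n : ℝ) * (dtot : ℕ) := hchain
            _ = ε / (1 + ε) * β := by
                rw [hβ]; field_simp; ring
          have h3 : α * (T:ℝ) ≤ β :=
            le_of_mul_le_mul_left h2 (by positivity)
          linarith
        obtain ⟨p, _, hp⟩ := Finset.exists_mem_eq_inf' (Finset.univ_nonempty)
          (fun p : (r : Fin m) × Fin (dr r) => c p ω)
        refine Set.mem_iUnion.mpr ⟨p, ?_⟩
        show c p ω ≤ β / t
        calc c p ω = α := by rw [hαdef, hp]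
        _ ≤ β / t := hαβ
      calc (T : ENNReal) = ∑ t ∈ Finset.Icc 1 T, (E t).indicator (fun _ => (1:ENNReal)) ω := by
            rw [Finset.sum_congr rfl (fun t ht => Set.indicator_of_mem (hmemE t ht) _)]
            simp [Nat.card_Icc]
      _ ≤ ∑ t ∈ Finset.Icc 1 Tmax, (E t).indicator (fun _ => (1:ENNReal)) ω := by
            apply Finset.sum_le_sum_of_subset
            exact Finset.Icc_subset_Icc_right (by omega)
  -- integrate
  have hae : ∀ᵐ ω ∂P, ω ∈ G := by
    rw [ae_iff]
    convert hGc using 2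
    rfl
  have step1 : ∫⁻ ω, (maxImprovingSeqLen strat (stepCost dr b fun r j => c ⟨r, j⟩ ω) ε : ENNReal) ∂P
      ≤ ∫⁻ ω, ∑ t ∈ Finset.Icc 1 Tmax, (E t).indicator (fun _ => (1:ENNReal)) ω ∂P := by
    apply lintegral_mono_ae
    filter_upwards [hae] with ω hω using hpt ω hω
  have step2 : ∫⁻ ω, ∑ t ∈ Finset.Icc 1 Tmax, (E t).indicator (fun _ => (1:ENNReal)) ω ∂P
      = ∑ t ∈ Finset.Icc 1 Tmax, P (E t) := by
    rw [lintegral_finset_sum _ (fun t _ => measurable_const.indicator (hEmeas t))]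
    congr 1
    ext t
    rw [lintegral_indicator (hEmeas t)]
    simp
  -- probability bounds
  have hPE : ∀ t : ℕ, 1 ≤ t → P (E t) ≤ ENNReal.ofReal ((dtot : ℝ) * (φ * (β / t))) := by
    intro t ht
    have ht0 : (0:ℝ) < t := by exact_mod_cast ht
    have hβt : 0 ≤ β / t := by positivity
    calc P (E t) ≤ ∑' p : (r : Fin m) × Fin (dr r), P {ω | c p ω ≤ β / t} :=
          measure_iUnion_le _
    _ = ∑ p : (r : Fin m) × Fin (dr r), P {ω | c p ω ≤ β / t} := tsum_fintype _
    _ ≤ ∑ _p : (r : Fin m) × Fin (dr r), ENNReal.ofReal (φ * (β / t)) :=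
          Finset.sum_le_sum fun p _ => phiSmooth_cdf hφ0 (hsmooth p) hβt
    _ = (dtot : ENNReal) * ENNReal.ofReal (φ * (β / t)) := by
          rw [Finset.sum_const]
          simp [Finset.card_univ, hcardι, nsmul_eq_mul]
    _ = ENNReal.ofReal ((dtot : ℝ) * (φ * (β / t))) := by
          rw [ENNReal.ofReal_mul (show (0:ℝ) ≤ (dtot:ℝ) by positivity), ENNReal.ofReal_natCast]
  have hsplit : Finset.Icc 1 Tmax = insert 1 (Finset.Icc 2 Tmax) := by
    have h1 : 1 ≤ Tmax := Nat.one_le_iff_ne_zero.mpr (by positivity)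
    ext t
    simp only [Finset.mem_Icc, Finset.mem_insert]
    omega
  have step3 : ∑ t ∈ Finset.Icc 1 Tmax, P (E t)
      ≤ 1 + ENNReal.ofReal (∑ t ∈ Finset.Icc 2 Tmax, (dtot : ℝ) * (φ * (β / t))) := by
    rw [hsplit, Finset.sum_insert (by simp)]
    gcongr
    · exact prob_le_one
    · calc ∑ t ∈ Finset.Icc 2 Tmax, P (E t)
          ≤ ∑ t ∈ Finset.Icc 2 Tmax, ENNReal.ofReal ((dtot : ℝ) * (φ * (β / t))) := by
            apply Finset.sum_le_sum
            intro t ht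
            rw [Finset.mem_Icc] at ht
            exact hPE t (by omega)
      _ = ENNReal.ofReal (∑ t ∈ Finset.Icc 2 Tmax, (dtot : ℝ) * (φ * (β / t))) := by
            rw [ENNReal.ofReal_sum_of_nonneg]
            intro t ht
            rw [Finset.mem_Icc] at ht
            have ht0 : (0:ℝ) < t := by
              have : (2:ℝ) ≤ (t:ℝ) := by exact_mod_cast ht.1
              linarith
            positivity
  -- the real-number estimate
  have hreal : ∑ t ∈ Finset.Icc 2 Tmax, (dtot : ℝ) * (φ * (β / t))
      ≤ φ * (1 + 1 / ε) * n * (dtot : ℕ) ^ 2 *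
          (m * Real.log (n + 1) + Real.log (dtot : ℕ)) := by
    have hsum : ∑ t ∈ Finset.Icc 2 Tmax, (dtot : ℝ) * (φ * (β / t))
        = (dtot : ℝ) * φ * β * ∑ t ∈ Finset.Icc 2 Tmax, (1 / (t:ℝ)) := by
      rw [Finset.mul_sum]
      apply Finset.sum_congr rfl
      intro t _
      ring
    have hlog : ∑ t ∈ Finset.Icc 2 Tmax, (1 / (t:ℝ)) ≤ (m : ℝ) * Real.log (n + 1) := by
      calc ∑ t ∈ Finset.Icc 2 Tmax, (1 / (t:ℝ)) ≤ Real.log Tmax := harmonic_le_log Tmax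
      _ = (m : ℝ) * Real.log (n + 1) := by
          rw [hTmax]
          push_cast
          rw [Real.log_pow]
    have hcoef : (0:ℝ) ≤ (dtot : ℝ) * φ * β := by positivity
    have hlogd : (0:ℝ) ≤ Real.log (dtot : ℕ) := by
      apply Real.log_nonneg
      have : (2:ℝ) ≤ (dtot : ℝ) := by exact_mod_cast hd2
      linarith
    have hcoef2 : (dtot : ℝ) * φ * β = φ * (1 + 1 / ε) * n * (dtot : ℝ) ^ 2 := by
      rw [hβ]; ring
    have hc2 : (0:ℝ) ≤ φ * (1 + 1 / ε) * n * (dtot : ℝ) ^ 2 := by positivity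
    calc ∑ t ∈ Finset.Icc 2 Tmax, (dtot : ℝ) * (φ * (β / t))
        = (dtot : ℝ) * φ * β * ∑ t ∈ Finset.Icc 2 Tmax, (1 / (t:ℝ)) := hsum
    _ ≤ (dtot : ℝ) * φ * β * ((m : ℝ) * Real.log (n + 1)) := by
        apply mul_le_mul_of_nonneg_left hlog hcoef
    _ = φ * (1 + 1 / ε) * n * (dtot : ℝ) ^ 2 * ((m : ℝ) * Real.log (n + 1)) := by
        rw [hcoef2]
    _ ≤ φ * (1 + 1 / ε) * n * (dtot : ℝ) ^ 2 *
          ((m : ℝ) * Real.log (n + 1) + Real.log (dtot : ℕ)) := by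
        apply mul_le_mul_of_nonneg_left _ hc2
        linarith
  -- put everything together
  calc ∫⁻ ω, (maxImprovingSeqLen strat (stepCost dr b fun r j => c ⟨r, j⟩ ω) ε : ENNReal) ∂P
      ≤ ∑ t ∈ Finset.Icc 1 Tmax, P (E t) := step1.trans (le_of_eq step2)
  _ ≤ 1 + ENNReal.ofReal (∑ t ∈ Finset.Icc 2 Tmax, (dtot : ℝ) * (φ * (β / t))) := step3
  _ ≤ 1 + ENNReal.ofReal (φ * (1 + 1 / ε) * n * (dtot : ℕ) ^ 2 *
          (m * Real.log (n + 1) + Real.log (dtot : ℕ))) := by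
        exact add_le_add_right (ENNReal.ofReal_le_ofReal hreal) 1
  _ = ENNReal.ofReal (φ * (1 + 1 / ε) * n * (dtot : ℕ) ^ 2 *
          (m * Real.log (n + 1) + Real.log (dtot : ℕ)) + 1) := by
        have hbig : 0 ≤ φ * (1 + 1 / ε) * n * ((dtot : ℕ) : ℝ) ^ 2 *
            (m * Real.log (n + 1) + Real.log (dtot : ℕ)) := by
          apply mul_nonneg (by positivity)
          have h1 : (0:ℝ) ≤ Real.log (n + 1) := Real.log_nonneg (by push_cast; linarith)
          have h2 : (0:ℝ) ≤ Real.log (dtot : ℕ) := by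
            apply Real.log_nonneg
            have : (2:ℝ) ≤ (dtot : ℝ) := by exact_mod_cast hd2
            linarith
          positivity
        rw [ENNReal.ofReal_add hbig zero_le_one, ENNReal.ofReal_one, add_comm]
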